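/- Let D be a bounded Lipschitz domain in ℝⁿ, and define the geodesic distance d_g^D(x,y) = inf{ℓ(ψ) : ψ : [0,1] → D Lipschitz, ψ(0) = x, ψ(1) = y}, where ℓ(ψ) = ∫₀¹ |ψ̇(t)| dt. Then d_g^D is essentially bounded on D × D: there exists C > 0 depending only on D such that d_g^D(x,y) ≤ C for all x, y ∈ D. -/

import Mathlib

open Set intervalIntegral

/-- Length of a path: `ℓ(ψ) = ∫₀¹ |ψ̇(t)| dt`. -/
noncomputable def pathLen {n : ℕ} (ψ : ℝ → EuclideanSpace ℝ (Fin n)) : ℝ :=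
  ∫ t in (0 : ℝ)..1, ‖deriv ψ t‖

/-- The geodesic distance in `D`: infimum of lengths of Lipschitz paths inside `D`
joining `x` to `y`. -/
noncomputable def geodDist {n : ℕ} (D : Set (EuclideanSpace ℝ (Fin n)))
    (x y : EuclideanSpace ℝ (Fin n)) : ℝ :=
  sInf {L : ℝ | ∃ ψ : ℝ → EuclideanSpace ℝ (Fin n), (∃ K : NNReal, LipschitzWith K ψ) ∧
    ψ 0 = x ∧ ψ 1 = y ∧ (∀ t ∈ Icc (0 : ℝ) 1, ψ t ∈ D) ∧ L = pathLen ψ}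

/-- A bounded Lipschitz domain: a bounded open connected set whose boundary is
locally bi-Lipschitz equivalent to a (convex) half-cube. -/
def IsLipschitzDomain {n : ℕ} (D : Set (EuclideanSpace ℝ (Fin n))) : Prop :=
  IsOpen D ∧ IsConnected D ∧ Bornology.IsBounded D ∧
  ∀ x ∈ frontier D, ∃ U Q : Set (EuclideanSpace ℝ (Fin n)),
    ∃ φ φinv : EuclideanSpace ℝ (Fin n) → EuclideanSpace ℝ (Fin n), ∃ kp km : NNReal,
      IsOpen U ∧ x ∈ U ∧ Convex ℝ Q ∧ LipschitzOnWith kp φ Q ∧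
      LipschitzOnWith km φinv (D ∩ U) ∧ Set.BijOn φ Q (D ∩ U) ∧
      ∀ y ∈ D ∩ U, φ (φinv y) = y ∧ φinv y ∈ Q

namespace GeodDistAux

variable {n : ℕ}

/-- `x` can be reached from `y` by a `K`-Lipschitz path staying in `D`. -/
def Reach (D : Set (EuclideanSpace ℝ (Fin n))) (K : NNReal)
    (x y : EuclideanSpace ℝ (Fin n)) : Prop :=
  ∃ ψ : ℝ → EuclideanSpace ℝ (Fin n), LipschitzWith K ψ ∧ ψ 0 = x ∧ ψ 1 = y ∧
    ∀ t ∈ Icc (0 : ℝ) 1, ψ t ∈ D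

lemma Reach.mono {D : Set (EuclideanSpace ℝ (Fin n))} {K K' : NNReal}
    {x y : EuclideanSpace ℝ (Fin n)} (hKK : K ≤ K') (h : Reach D K x y) :
    Reach D K' x y := by
  obtain ⟨ψ, hl, h0, h1, hm⟩ := h
  exact ⟨ψ, hl.weaken hKK, h0, h1, hm⟩

lemma Reach.symm {D : Set (EuclideanSpace ℝ (Fin n))} {K : NNReal}
    {x y : EuclideanSpace ℝ (Fin n)} (h : Reach D K x y) : Reach D K y x := by
  obtain ⟨f, hf, h0, h1, hm⟩ := h
  have hrev : LipschitzWith 1 (fun t : ℝ => 1 - t) := by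
    rw [lipschitzWith_iff_dist_le_mul]
    intro s u
    simp only [Real.dist_eq, NNReal.coe_one, one_mul]
    rw [show (1:ℝ) - s - (1 - u) = -(s - u) by ring, abs_neg]
  refine ⟨fun t => f (1 - t), ?_, by simpa using h1, by simpa using h0, ?_⟩
  · simpa [Function.comp_def] using hf.comp hrev
  · intro t ht
    exact hm (1 - t) ⟨by linarith [ht.2], by linarith [ht.1]⟩

lemma Reach.trans {D : Set (EuclideanSpace ℝ (Fin n))} {K₁ K₂ : NNReal}
    {x y z : EuclideanSpace ℝ (Fin n)} (h₁ : Reach D K₁ x y) (h₂ : Reach D K₂ y z) :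
    Reach D (2 * max K₁ K₂) x z := by
  obtain ⟨f, hf, hf0, hf1, hfm⟩ := h₁
  obtain ⟨g, hg, hg0, hg1, hgm⟩ := h₂
  set M : NNReal := max K₁ K₂ with hM
  have hf' : LipschitzWith M f := hf.weaken (le_max_left _ _)
  have hg' : LipschitzWith M g := hg.weaken (le_max_right _ _)
  have hfg : f 1 = g 0 := by rw [hf1, hg0]
  refine ⟨fun t => if t ≤ 1/2 then f (2*t) else g (2*t - 1), ?_, ?_, ?_, ?_⟩
  · rw [lipschitzWith_iff_dist_le_mul]
    have key : ∀ s u : ℝ, s ≤ u →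
        dist (if s ≤ 1/2 then f (2*s) else g (2*s-1))
          (if u ≤ 1/2 then f (2*u) else g (2*u-1)) ≤ (2*M : NNReal) * dist s u := by
      intro s u hsu
      have h2M : ((2*M : NNReal) : ℝ) = 2 * (M:ℝ) := by push_cast; ring
      by_cases hs : s ≤ 1/2 <;> by_cases hu : u ≤ 1/2
      · simp only [if_pos hs, if_pos hu]
        calc dist (f (2*s)) (f (2*u)) ≤ M * dist (2*s) (2*u) := hf'.dist_le_mul _ _
        _ = (2*M : NNReal) * dist s u := by
            rw [Real.dist_eq, Real.dist_eq, h2M,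
              show (2:ℝ)*s - 2*u = 2*(s-u) by ring, abs_mul]
            norm_num; ring
      · simp only [if_pos hs, if_neg hu]
        push_neg at hu
        have habs : dist s u = u - s := by rw [Real.dist_eq, abs_of_nonpos (by linarith)]; ring
        calc dist (f (2*s)) (g (2*u-1))
            ≤ dist (f (2*s)) (f 1) + dist (g 0) (g (2*u-1)) := by
              rw [hfg]; exact dist_triangle _ _ _
        _ ≤ M * dist (2*s) 1 + M * dist 0 (2*u-1) :=
              add_le_add (hf'.dist_le_mul _ _) (hg'.dist_le_mul _ _)
        _ = M * (1 - 2*s) + M * (2*u - 1) := by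
              rw [Real.dist_eq, Real.dist_eq, abs_of_nonpos (by linarith),
                abs_of_nonpos (by linarith)]
              ring
        _ = (2*M : NNReal) * dist s u := by rw [habs, h2M]; ring
      · push_neg at hs; exact absurd (hsu.trans hu) (not_le.2 hs)
      · simp only [if_neg hs, if_neg hu]
        calc dist (g (2*s-1)) (g (2*u-1)) ≤ M * dist (2*s-1) (2*u-1) := hg'.dist_le_mul _ _
        _ = (2*M : NNReal) * dist s u := by
            rw [Real.dist_eq, Real.dist_eq, h2M,
              show (2:ℝ)*s - 1 - (2*u - 1) = 2*(s-u) by ring, abs_mul]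
            norm_num; ring
    intro s u
    rcases le_total s u with h | h
    · exact key s u h
    · calc dist (if s ≤ 1/2 then f (2*s) else g (2*s-1))
            (if u ≤ 1/2 then f (2*u) else g (2*u-1))
          = dist (if u ≤ 1/2 then f (2*u) else g (2*u-1))
            (if s ≤ 1/2 then f (2*s) else g (2*s-1)) := dist_comm _ _
      _ ≤ (2*M : NNReal) * dist u s := key u s h
      _ = (2*M : NNReal) * dist s u := by rw [dist_comm]
  · norm_num [hf0]
  · norm_num [hg1]
  · intro t ht
    by_cases h : t ≤ 1/2
    · simp only [if_pos h]
      exact hfm _ ⟨by linarith [ht.1], by linarith⟩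
    · push_neg at h
      simp only [if_neg (not_le.2 h)]
      exact hgm _ ⟨by linarith, by linarith [ht.2]⟩

lemma Reach.refl {D : Set (EuclideanSpace ℝ (Fin n))} {x : EuclideanSpace ℝ (Fin n)}
    (hx : x ∈ D) (K : NNReal) : Reach D K x x :=
  Reach.mono (zero_le : (0:NNReal) ≤ K) ⟨fun _ => x, LipschitzWith.const x, rfl, rfl, fun _ _ => hx⟩

/-- The clamp function. -/
noncomputable def clamp (t : ℝ) : ℝ := max 0 (min t 1)

lemma clamp_lipschitz : LipschitzWith 1 clamp :=
  (LipschitzWith.id.min_const 1).const_max 0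

lemma clamp_mem (t : ℝ) : clamp t ∈ Icc (0:ℝ) 1 :=
  ⟨le_max_left _ _, max_le zero_le_one (min_le_right _ _)⟩

lemma clamp_zero : clamp 0 = 0 := by norm_num [clamp]

lemma clamp_one : clamp 1 = 1 := by norm_num [clamp]

/-- The clamped affine path from `a` to `b`. -/
noncomputable def seg (a b : EuclideanSpace ℝ (Fin n)) (t : ℝ) :
    EuclideanSpace ℝ (Fin n) := a + clamp t • (b - a)

lemma seg_lipschitz (a b : EuclideanSpace ℝ (Fin n)) :
    LipschitzWith ‖b - a‖₊ (seg a b) := by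
  have houter : LipschitzWith ‖b - a‖₊ (fun r : ℝ => a + r • (b - a)) := by
    rw [lipschitzWith_iff_dist_le_mul]
    intro s u
    rw [dist_eq_norm]
    have heq : a + s • (b - a) - (a + u • (b - a)) = (s - u) • (b - a) := by
      rw [add_sub_add_left_eq_sub, ← sub_smul]
    rw [heq, norm_smul, Real.dist_eq, Real.norm_eq_abs, coe_nnnorm, mul_comm]
  have h := houter.comp clamp_lipschitz
  rw [mul_one] at h
  exact h

lemma seg_mem_segment (a b : EuclideanSpace ℝ (Fin n)) (t : ℝ) :
    seg a b t ∈ segment ℝ a b := by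
  rw [segment_eq_image']
  exact ⟨clamp t, clamp_mem t, rfl⟩

lemma seg_zero (a b : EuclideanSpace ℝ (Fin n)) : seg a b 0 = a := by
  simp [seg, clamp_zero]

lemma seg_one (a b : EuclideanSpace ℝ (Fin n)) : seg a b 1 = b := by
  simp [seg, clamp_one]

lemma reach_of_segment {D : Set (EuclideanSpace ℝ (Fin n))}
    {x y : EuclideanSpace ℝ (Fin n)} (h : segment ℝ x y ⊆ D) :
    Reach D ‖y - x‖₊ x y :=
  ⟨seg x y, seg_lipschitz x y, seg_zero x y, seg_one x y,
    fun t _ => h (seg_mem_segment x y t)⟩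

/-- Any `K`-Lipschitz path has length at most `K`. -/
lemma pathLen_le {K : NNReal} {ψ : ℝ → EuclideanSpace ℝ (Fin n)}
    (hl : LipschitzWith K ψ) : pathLen ψ ≤ K := by
  have hb : ∀ s ∈ Set.uIoc (0:ℝ) 1, ‖‖deriv ψ s‖‖ ≤ (K:ℝ) := by
    intro s _
    rw [norm_norm]
    calc ‖deriv ψ s‖ = ‖fderiv ℝ ψ s 1‖ := by rw [fderiv_apply_one_eq_deriv]
    _ ≤ ‖fderiv ℝ ψ s‖ * ‖(1:ℝ)‖ := (fderiv ℝ ψ s).le_opNorm 1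
    _ ≤ (K:ℝ) * 1 := by
        apply mul_le_mul (norm_fderiv_le_of_lipschitz ℝ hl) (by norm_num)
          (norm_nonneg _) K.coe_nonneg
    _ = (K:ℝ) := mul_one _
  have := intervalIntegral.norm_integral_le_of_norm_le_const hb
  calc pathLen ψ ≤ ‖pathLen ψ‖ := le_abs_self _
  _ = ‖∫ t in (0:ℝ)..1, ‖deriv ψ t‖‖ := rfl
  _ ≤ (K:ℝ) * |1 - (0:ℝ)| := this
  _ = (K:ℝ) := by norm_num

lemma pathLen_nonneg (ψ : ℝ → EuclideanSpace ℝ (Fin n)) : 0 ≤ pathLen ψ :=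
  intervalIntegral.integral_nonneg zero_le_one (fun u _ => norm_nonneg _)

lemma geodDist_le_of_reach {D : Set (EuclideanSpace ℝ (Fin n))} {K : NNReal}
    {x y : EuclideanSpace ℝ (Fin n)} (h : Reach D K x y) : geodDist D x y ≤ K := by
  obtain ⟨ψ, hl, h0, h1, hm⟩ := h
  have hmem : pathLen ψ ∈ {L : ℝ | ∃ ψ : ℝ → EuclideanSpace ℝ (Fin n),
      (∃ K : NNReal, LipschitzWith K ψ) ∧ ψ 0 = x ∧ ψ 1 = y ∧
      (∀ t ∈ Icc (0 : ℝ) 1, ψ t ∈ D) ∧ L = pathLen ψ} :=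
    ⟨ψ, ⟨K, hl⟩, h0, h1, hm, rfl⟩
  have hbdd : BddBelow {L : ℝ | ∃ ψ : ℝ → EuclideanSpace ℝ (Fin n),
      (∃ K : NNReal, LipschitzWith K ψ) ∧ ψ 0 = x ∧ ψ 1 = y ∧
      (∀ t ∈ Icc (0 : ℝ) 1, ψ t ∈ D) ∧ L = pathLen ψ} := by
    refine ⟨0, fun L hL => ?_⟩
    obtain ⟨ψ', -, -, -, -, rfl⟩ := hL
    exact pathLen_nonneg ψ'
  exact le_trans (csInf_le hbdd hmem) (pathLen_le hl)

end GeodDistAux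

open GeodDistAux in
theorem geodDist_bounded {n : ℕ} (D : Set (EuclideanSpace ℝ (Fin n)))
    (hD : IsLipschitzDomain D) :
    ∃ C : ℝ, 0 < C ∧ ∀ x ∈ D, ∀ y ∈ D, geodDist D x y ≤ C := by
  obtain ⟨hopen, hconn, hbdd, hchart⟩ := hD
  -- diameter bound
  obtain ⟨ρ₀, hρ₀⟩ := Metric.isBounded_iff.1 hbdd
  set ρ : NNReal := ρ₀.toNNReal with hρdef
  have hρ : ∀ x ∈ D, ∀ y ∈ D, nndist x y ≤ ρ := by
    intro x hx y hy
    rw [← NNReal.coe_le_coe, coe_nndist]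
    exact (hρ₀ hx hy).trans (Real.le_coe_toNNReal ρ₀)
  -- local geodesic bound near every point of the closure
  have hloc : ∀ p ∈ closure D, ∃ V : Set (EuclideanSpace ℝ (Fin n)), IsOpen V ∧ p ∈ V ∧
      ∃ K : NNReal, ∀ x ∈ D ∩ V, ∀ y ∈ D ∩ V, Reach D K x y := by
    intro p hp
    by_cases hpD : p ∈ D
    · obtain ⟨r, hr, hball⟩ := Metric.isOpen_iff.1 hopen p hpD
      refine ⟨Metric.ball p r, Metric.isOpen_ball, Metric.mem_ball_self hr, ρ, ?_⟩
      rintro x ⟨hxD, hxB⟩ y ⟨hyD, hyB⟩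
      have hseg : segment ℝ x y ⊆ D :=
        subset_trans ((convex_ball p r).segment_subset hxB hyB) hball
      refine (reach_of_segment hseg).mono ?_
      rw [← nndist_eq_nnnorm]
      rw [nndist_comm]
      exact hρ x hxD y hyD
    · have hpf : p ∈ frontier D := by
        rw [hopen.frontier_eq]
        exact ⟨hp, hpD⟩
      obtain ⟨U, Q, φ, φinv, kp, km, hU, hpU, hQ, hφ, hinv, hbij, hret⟩ := hchart p hpf
      refine ⟨U, hU, hpU, kp * (km * ρ), ?_⟩
      intro x hx y hy
      obtain ⟨hφx, haQ⟩ := hret x hx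
      obtain ⟨hφy, hbQ⟩ := hret y hy
      set a := φinv x with ha
      set b := φinv y with hb
      have hpmaps : ∀ t, seg a b t ∈ Q :=
        fun t => hQ.segment_subset haQ hbQ (seg_mem_segment a b t)
      have hcomp : LipschitzWith (kp * ‖b - a‖₊) (φ ∘ seg a b) := by
        rw [← lipschitzOnWith_univ]
        exact hφ.comp ((seg_lipschitz a b).lipschitzOnWith) (fun t _ => hpmaps t)
      have hba : ‖b - a‖₊ ≤ km * ρ := by
        rw [← nndist_eq_nnnorm, ← NNReal.coe_le_coe, coe_nndist]
        push_cast
        calc dist b a ≤ km * dist y x := hinv.dist_le_mul y hy x hx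
        _ ≤ (km : ℝ) * ρ := by
            have hyx : dist y x ≤ (ρ : ℝ) := by
              rw [← coe_nndist]
              exact_mod_cast (nndist_comm y x ▸ hρ x hx.1 y hy.1 : nndist y x ≤ ρ)
            exact mul_le_mul_of_nonneg_left hyx km.coe_nonneg
      refine Reach.mono (mul_le_mul_right hba kp) ?_
      refine ⟨φ ∘ seg a b, hcomp, ?_, ?_, ?_⟩
      · simp [Function.comp_def, seg_zero, ← ha, hφx]
      · simp [Function.comp_def, seg_one, ← hb, hφy]
      · intro t _
        exact (hbij.mapsTo (hpmaps t)).1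
  -- compactness of the closure; finite subcover
  have hcomp : IsCompact (closure D) := hbdd.isCompact_closure
  choose! V hVopen hVmem K hK using hloc
  obtain ⟨t, hts, htcov⟩ := hcomp.elim_nhds_subcover V
    (fun p hp => (hVopen p hp).mem_nhds (hVmem p hp))
  -- reachable set from a base point is all of D (connectedness)
  obtain ⟨x₀, hx₀⟩ := hconn.nonempty
  set S : Set (EuclideanSpace ℝ (Fin n)) :=
    {y | y ∈ D ∧ ∃ K' : NNReal, Reach D K' x₀ y} with hSdef
  have hSopen : IsOpen S := by
    rw [Metric.isOpen_iff]
    rintro y ⟨hyD, K', hK'⟩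
    obtain ⟨r, hr, hball⟩ := Metric.isOpen_iff.1 hopen y hyD
    refine ⟨r, hr, fun z hz => ?_⟩
    have hseg : segment ℝ y z ⊆ D :=
      subset_trans ((convex_ball y r).segment_subset (Metric.mem_ball_self hr) hz) hball
    exact ⟨hball hz, _, hK'.trans (reach_of_segment hseg)⟩
  have hTopen : IsOpen (D \ S) := by
    rw [Metric.isOpen_iff]
    rintro y ⟨hyD, hyS⟩
    obtain ⟨r, hr, hball⟩ := Metric.isOpen_iff.1 hopen y hyD
    refine ⟨r, hr, fun z hz => ⟨hball hz, fun hzS => hyS ?_⟩⟩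
    obtain ⟨hzD, K', hK'⟩ := hzS
    have hseg : segment ℝ z y ⊆ D :=
      subset_trans ((convex_ball y r).segment_subset hz (Metric.mem_ball_self hr)) hball
    exact ⟨hyD, _, hK'.trans (reach_of_segment hseg)⟩
  have hSD : D ⊆ S := by
    by_contra hcon
    have hTne : (D ∩ (D \ S)).Nonempty := by
      rw [not_subset] at hcon
      obtain ⟨y, hyD, hyS⟩ := hcon
      exact ⟨y, hyD, hyD, hyS⟩
    have hSne : (D ∩ S).Nonempty := ⟨x₀, hx₀, hx₀, 1, Reach.refl hx₀ 1⟩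
    have hcup : D ⊆ S ∪ (D \ S) := by
      intro y hy
      by_cases h : y ∈ S
      · exact Or.inl h
      · exact Or.inr ⟨hy, h⟩
    obtain ⟨w, -, hwS, -, hwS'⟩ := hconn.isPreconnected S (D \ S) hSopen hTopen hcup hSne hTne
    exact hwS' hwS
  -- uniform constant via the finite cover
  have hy' : ∀ p : EuclideanSpace ℝ (Fin n), ∃ Kp : NNReal,
      ((D ∩ V p).Nonempty → ∃ yp ∈ D ∩ V p, Reach D Kp x₀ yp) := by
    intro p
    by_cases h : (D ∩ V p).Nonempty
    · obtain ⟨yp, hyp⟩ := h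
      obtain ⟨-, K', hK'⟩ := hSD hyp.1
      exact ⟨K', fun _ => ⟨yp, hyp, hK'⟩⟩
    · exact ⟨0, fun h' => absurd h' h⟩
  choose M hM using hy'
  set K1 : NNReal := t.sup M ⊔ t.sup K with hK1def
  have hreach : ∀ y ∈ D, Reach D (2 * K1) x₀ y := by
    intro y hy
    have hyc : y ∈ closure D := subset_closure hy
    obtain ⟨p, hpt, hyV⟩ := Set.mem_iUnion₂.1 (htcov hyc)
    have hne : (D ∩ V p).Nonempty := ⟨y, hy, hyV⟩
    obtain ⟨yp, hyp, hrp⟩ := hM p hne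
    have h1 : Reach D K1 x₀ yp :=
      hrp.mono (le_trans (Finset.le_sup hpt) le_sup_left)
    have h2 : Reach D K1 yp y :=
      (hK p (hts p hpt) yp hyp y ⟨hy, hyV⟩).mono (le_trans (Finset.le_sup hpt) le_sup_right)
    have := h1.trans h2
    rwa [max_self] at this
  set K2 : NNReal := 2 * (2 * K1) with hK2def
  refine ⟨(K2 : ℝ) + 1, by positivity, ?_⟩
  intro x hx y hy
  have h1 : Reach D (2 * K1) x x₀ := (hreach x hx).symm
  have h2 : Reach D (2 * K1) x₀ y := hreach y hy
  have h3 : Reach D K2 x y := by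
    have := h1.trans h2
    rwa [max_self] at this
  calc geodDist D x y ≤ (K2 : ℝ) := geodDist_le_of_reach h3
  _ ≤ (K2 : ℝ) + 1 := by linarith
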